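/- Let p be a prime, L a field of characteristic p, R = L[x_1,…,x_n] with an ℕ-grading (deg x_i = w_i > 0), and f ∈ m homogeneous of degree d with λ := (Σ w_i)/d ≤ 1. Suppose e ≥ 1 satisfies (p^e − 1)·λ ∈ ℕ, and let g be a polynomial all of whose monomials have degree at least d+1. Then (f+g)^{p^e⟨λ⟩_e} ≡ f^{p^e⟨λ⟩_e} modulo the ideal (x_1^{p^e},…,x_n^{p^e}). -/

import Mathlib

open MvPolynomial

/-- The `e`-th truncation of the non-terminating base `p` expansion of `α ∈ (0,1]`:
the unique multiple of `p^{-e}` with `⟨α⟩_e < α ≤ ⟨α⟩_e + p^{-e}`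
(with the convention `⟨α⟩_e = 0` for `α ≤ 0`). -/
noncomputable def trunc (p e : ℕ) (α : ℝ) : ℝ :=
  if α ≤ 0 then 0 else (⌈α * (p : ℝ) ^ e⌉ - 1) / (p : ℝ) ^ e

/-- The `e`-th digit (`e ≥ 1`) of the non-terminating base `p` expansion of `α ∈ (0,1]`,
namely `p^e ⟨α⟩_e - p^e ⟨α⟩_{e-1}`. -/
noncomputable def digit (p e : ℕ) (α : ℝ) : ℤ :=
  (⌈α * (p : ℝ) ^ e⌉ - 1) - p * (⌈α * (p : ℝ) ^ (e - 1)⌉ - 1)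

/-- Least positive residue of `m` modulo `b`: the unique `r` with `1 ≤ r ≤ b`, `r ≡ m (mod b)`. -/
def lpr (m b : ℤ) : ℤ := if m % b = 0 then b else m % b

/-- The `e`-th Frobenius power `m^{[p^e]} = (x_1^{p^e}, …, x_n^{p^e})`. -/
noncomputable def frobPow (p n : ℕ) (K : Type*) [Field K] (e : ℕ) :
    Ideal (MvPolynomial (Fin n) K) :=
  Ideal.span (Set.range fun i => (X i : MvPolynomial (Fin n) K) ^ p ^ e)

/-- `ν_f(p^e) = max { N | f^N ∉ m^{[p^e]} }`. -/
noncomputable def nu (p : ℕ) {n : ℕ} {K : Type*} [Field K]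
    (f : MvPolynomial (Fin n) K) (e : ℕ) : ℕ :=
  sSup {N : ℕ | f ^ N ∉ frobPow p n K e}

/-- The F-pure threshold `fpt(f) = lim_e ν_f(p^e)/p^e`; since the sequence is
non-decreasing and bounded, the limit equals the supremum. -/
noncomputable def fpt (p : ℕ) {n : ℕ} {K : Type*} [Field K]
    (f : MvPolynomial (Fin n) K) : ℝ :=
  ⨆ e : ℕ, (nu p f e : ℝ) / (p : ℝ) ^ e

/-- The maximal ideal `m = (x_1, …, x_n)`. -/
noncomputable def mIdeal (n : ℕ) (K : Type*) [Field K] : Ideal (MvPolynomial (Fin n) K) :=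
  Ideal.span (Set.range (X : Fin n → MvPolynomial (Fin n) K))

section auxLemmas
variable {p n : ℕ} {K : Type*} [Field K]

lemma monomial_mem_frob {e : ℕ} {u : Fin n →₀ ℕ} (c : K) {i : Fin n} (h : p ^ e ≤ u i) :
    (monomial u c : MvPolynomial (Fin n) K) ∈ frobPow p n K e := by
  have hu : u = (u - Finsupp.single i (p ^ e)) + Finsupp.single i (p ^ e) := by
    ext j
    by_cases hj : j = i
    · subst hj; simp [Finsupp.single_apply]; omega
    · simp [Finsupp.single_apply, Ne.symm hj]
  rw [hu, ← one_mul c, mul_comm, ← monomial_mul, ← X_pow_eq_monomial]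
  exact Ideal.mul_mem_left _ _ (Ideal.subset_span ⟨i, rfl⟩)

lemma mem_frobPow_of_deg (w : Fin n → ℕ) {e : ℕ} {h : MvPolynomial (Fin n) K}
    (hh : ∀ u ∈ h.support, (p ^ e - 1) * ∑ i, w i < ∑ i, u i * w i) :
    h ∈ frobPow p n K e := by
  rw [h.as_sum]
  refine Ideal.sum_mem _ fun u hu => ?_
  have hex : ∃ i, p ^ e ≤ u i := by
    by_contra hc
    push_neg at hc
    have hb : ∑ i, u i * w i ≤ (p ^ e - 1) * ∑ i, w i := by
      rw [Finset.mul_sum]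
      exact Finset.sum_le_sum fun i _ => Nat.mul_le_mul_right _ (by have := hc i; omega)
    exact absurd (hh u hu) (not_lt.mpr hb)
  obtain ⟨i, hi⟩ := hex
  exact monomial_mem_frob _ hi

lemma minDeg_mul (w : Fin n → ℕ) {a b : MvPolynomial (Fin n) K} {c₁ c₂ : ℕ}
    (ha : ∀ u ∈ a.support, c₁ ≤ ∑ i, u i * w i)
    (hb : ∀ u ∈ b.support, c₂ ≤ ∑ i, u i * w i) :
    ∀ u ∈ (a * b).support, c₁ + c₂ ≤ ∑ i, u i * w i := by
  classical
  intro u hu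
  have hmem := MvPolynomial.support_mul a b hu
  rw [Finset.mem_add] at hmem
  obtain ⟨x, hx, y, hy, rfl⟩ := hmem
  have : ∑ i, (x + y) i * w i = (∑ i, x i * w i) + ∑ i, y i * w i := by
    rw [← Finset.sum_add_distrib]
    exact Finset.sum_congr rfl fun i _ => by simp [add_mul]
  rw [this]
  exact add_le_add (ha x hx) (hb y hy)

lemma minDeg_pow (w : Fin n → ℕ) {a : MvPolynomial (Fin n) K} {c : ℕ}
    (ha : ∀ u ∈ a.support, c ≤ ∑ i, u i * w i) (m : ℕ) :
    ∀ u ∈ (a ^ m).support, m * c ≤ ∑ i, u i * w i := by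
  induction m with
  | zero => intro u hu; simp
  | succ m ih =>
      rw [pow_succ]
      have := minDeg_mul w ih ha
      simpa [Nat.succ_mul] using this

end auxLemmas

/-- if `λ = (Σ w_i)/d ≤ 1`, `(p^e − 1)λ ∈ ℕ` and every monomial of `g`
has degree `≥ d + 1`, then `(f+g)^{p^e⟨λ⟩_e} ≡ f^{p^e⟨λ⟩_e} mod m^{[p^e]}`. -/

theorem stmt_12 (p : ℕ) (hp : p.Prime) (n : ℕ) (K : Type*) [Field K] [CharP K p]
    (w : Fin n → ℕ) (hw : ∀ i, 0 < w i) (d : ℕ)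
    (f : MvPolynomial (Fin n) K) (hf0 : f ≠ 0)
    (hfh : f.IsWeightedHomogeneous w d) (hfm : f ∈ mIdeal n K)
    (lam : ℝ) (hlam : lam = (∑ i, (w i : ℝ)) / d) (hlam1 : lam ≤ 1)
    (e : ℕ) (he : 1 ≤ e) (hnat : ∃ k : ℕ, ((p : ℝ) ^ e - 1) * lam = k)
    (g : MvPolynomial (Fin n) K)
    (hg : ∀ u ∈ g.support, d + 1 ≤ ∑ i, u i * w i)
    (N : ℕ) (hN : (N : ℝ) = (p : ℝ) ^ e * trunc p e lam) :
    (f + g) ^ N - f ^ N ∈ frobPow p n K e := by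
  by_cases hN0 : N = 0
  · subst hN0; simp
  -- lam > 0
  have hppos : (0:ℝ) < (p:ℝ) ^ e := by
    have := hp.pos
    positivity
  have hlam0 : 0 < lam := by
    by_contra hc
    push_neg at hc
    rw [trunc, if_pos hc, mul_zero] at hN
    exact hN0 (Nat.cast_eq_zero.mp hN)
  obtain ⟨k, hk⟩ := hnat
  -- ceiling computation
  have hceil : ⌈lam * (p : ℝ) ^ e⌉ = (k : ℤ) + 1 := by
    have h1 : lam * (p : ℝ) ^ e = lam + (k : ℝ) := by
      rw [← hk]; ring
    rw [h1, Int.ceil_add_natCast]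
    have hle : ⌈lam⌉ ≤ 1 := Int.ceil_le.mpr (by simpa using hlam1)
    have hgt : 0 < ⌈lam⌉ := Int.ceil_pos.mpr hlam0
    have : ⌈lam⌉ = 1 := le_antisymm hle hgt
    rw [this]; ring
  have hNk : N = k := by
    have : (N : ℝ) = (k : ℝ) := by
      rw [hN, trunc, if_neg (not_le.mpr hlam0), hceil]
      push_cast
      field_simp
      ring
    exact_mod_cast this
  -- d and S positive
  have hd0 : d ≠ 0 := by
    intro hd
    rw [hd] at hlam
    simp at hlam
    rw [hlam] at hlam0
    exact lt_irrefl _ hlam0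
  have hlamd : lam * d = ∑ i, (w i : ℝ) := by
    rw [hlam, div_mul_cancel₀]
    exact_mod_cast hd0
  -- key: N * d = (p^e - 1) * S in ℕ
  have hpe1 : 1 ≤ p ^ e := Nat.one_le_pow _ _ hp.pos
  have key : N * d = (p ^ e - 1) * ∑ i, w i := by
    have hr : ((N * d : ℕ) : ℝ) = (((p ^ e - 1) * ∑ i, w i : ℕ) : ℝ) := by
      push_cast [Nat.cast_sub hpe1]
      rw [hNk, ← hk, mul_assoc, hlamd]
    exact_mod_cast hr
  -- min degree of f
  have hfd : ∀ u ∈ f.support, d ≤ ∑ i, u i * w i := by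
    intro u hu
    have h1 := hfh (mem_support_iff.mp hu)
    have h2 : (Finsupp.weight w) u = ∑ i, u i * w i := by
      simp only [Finsupp.weight_apply, Finsupp.sum, smul_eq_mul]
      exact Finset.sum_subset (Finset.subset_univ _)
        fun i _ hi => by simp [Finsupp.notMem_support_iff.mp hi]
    rw [← h1]
    exact le_of_eq h2
  -- expansion
  rw [add_pow, Finset.sum_range_succ]
  simp only [Nat.sub_self, pow_zero, mul_one, Nat.choose_self, Nat.cast_one]
  rw [add_sub_cancel_right]
  refine Ideal.sum_mem _ fun j hj => ?_
  rw [Finset.mem_range] at hj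
  apply mem_frobPow_of_deg w
  intro u hu
  have hcast : ∀ u ∈ ((N.choose j : MvPolynomial (Fin n) K)).support,
      0 ≤ ∑ i, u i * w i := fun u _ => Nat.zero_le _
  have hmd := minDeg_mul w (minDeg_mul w (minDeg_pow w hfd j) (minDeg_pow w hg (N - j))) hcast
  have hle := hmd u hu
  have harith : (p ^ e - 1) * (∑ i, w i) < j * d + (N - j) * (d + 1) + 0 := by
    rw [← key]
    have : j * d + (N - j) * (d + 1) = N * d + (N - j) := by
      have : j ≤ N := le_of_lt hj
      nlinarith [Nat.sub_add_cancel this]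
    omega
  exact lt_of_lt_of_le harith hle
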